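/- For all integers m and e, the tetrahedral index satisfies u^{e} · I_Δ(m+1, e) + u^{-m} · I_Δ(m, e+1) - I_Δ(m,e) = 0, where u plays the role of q^{1/2} (so u^{e} = q^{e/2} and u^{-m} = q^{-m/2}). -/

import Mathlib

open scoped BigOperators

/-- Finite q-Pochhammer symbol `(a;q)_n = ∏_{i=0}^{n-1} (1 - a q^i)`. -/
noncomputable def qPoch (a q : ℂ) (n : ℕ) : ℂ :=
  ∏ i ∈ Finset.range n, (1 - a * q ^ i)

/-- Infinite q-Pochhammer symbol `(a;q)_∞ = ∏_{i=0}^{∞} (1 - a q^i)`. -/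
noncomputable def qPochInf (a q : ℂ) : ℂ :=
  ∏' i : ℕ, (1 - a * q ^ i)

/-- The `n`-th term of the series defining the tetrahedral index `I_Δ(m,e)`,
with `q = u^2` and vanishing below `e₊ = max(-e,0)`. -/
noncomputable def tetTerm (u : ℂ) (m e : ℤ) (n : ℕ) : ℂ :=
  if (-e).toNat ≤ n then
    (-1 : ℂ) ^ n * u ^ ((n : ℤ) * ((n : ℤ) + 1) - (2 * (n : ℤ) + e) * m) /
      (qPoch (u ^ 2) (u ^ 2) n * qPoch (u ^ 2) (u ^ 2) ((n : ℤ) + e).toNat)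
  else 0

/-- The tetrahedral index `I_Δ(m,e) = Σ_{n=e₊}^∞ (-1)^n u^{n(n+1)-(2n+e)m}/((q;q)_n (q;q)_{n+e})`. -/
noncomputable def tetIndex (u : ℂ) (m e : ℤ) : ℂ := ∑' n : ℕ, tetTerm u m e n

/-! ### Auxiliary material -/

/-- The telescoping term. -/
noncomputable def dTerm (u : ℂ) (m e : ℤ) (n : ℕ) : ℂ :=
  (-1 : ℂ) ^ n * u ^ ((n : ℤ) * ((n : ℤ) + 1) - (2 * (n : ℤ) + e) * m - 2 * (n : ℤ)) *
      ((1 - (u ^ 2) ^ n) * (1 - (u ^ 2) ^ ((n : ℤ) + e + 1).toNat)) /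
    (qPoch (u ^ 2) (u ^ 2) n * qPoch (u ^ 2) (u ^ 2) ((n : ℤ) + e + 1).toNat)

lemma mul_div_helper (x c t D : ℂ) : x * (c * t / D) = c * (x * t) / D := by ring

lemma weier (g : ℕ → ℝ) (h0 : ∀ i, 0 ≤ g i) (h1 : ∀ i, g i ≤ 1) (n : ℕ) :
    1 - ∑ i ∈ Finset.range n, g i ≤ ∏ i ∈ Finset.range n, (1 - g i) := by
  induction n with
  | zero => simp
  | succ n ih =>
    rw [Finset.prod_range_succ, Finset.sum_range_succ]
    have hgn0 := h0 n
    have hgn1 := h1 n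
    have hsum : 0 ≤ ∑ i ∈ Finset.range n, g i := Finset.sum_nonneg fun i _ => h0 i
    have h2 := mul_le_mul_of_nonneg_right ih (by linarith : (0:ℝ) ≤ 1 - g n)
    nlinarith [mul_nonneg hsum hgn0]

lemma qPoch_factor_ne (u : ℂ) (hu1 : ‖u‖ < 1) (i : ℕ) : (1 : ℂ) - u ^ 2 * (u ^ 2) ^ i ≠ 0 := by
  intro h
  have hz : u ^ 2 * (u ^ 2) ^ i = 1 := by linear_combination -h
  have h1 : ‖u ^ 2 * (u ^ 2) ^ i‖ < 1 := by
    simp only [norm_mul, norm_pow]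
    have hx1 : ‖u‖ ^ 2 < 1 := pow_lt_one₀ (norm_nonneg u) hu1 two_ne_zero
    have hle : (‖u‖ ^ 2) ^ i ≤ 1 := pow_le_one₀ (by positivity) hx1.le
    nlinarith [pow_nonneg (pow_nonneg (norm_nonneg u) 2) i]
  rw [hz] at h1
  simp at h1

lemma qPoch_ne (u : ℂ) (hu1 : ‖u‖ < 1) (k : ℕ) : qPoch (u ^ 2) (u ^ 2) k ≠ 0 :=
  Finset.prod_ne_zero_iff.mpr fun i _ => qPoch_factor_ne u hu1 i

lemma qPoch_succ (a q : ℂ) (n : ℕ) :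
    qPoch a q (n + 1) = qPoch a q n * (1 - a * q ^ n) := Finset.prod_range_succ _ n

lemma qPoch_lower (u : ℂ) (hu1 : ‖u‖ < 1) :
    ∃ C : ℝ, 0 < C ∧ ∀ n, C ≤ ‖qPoch (u ^ 2) (u ^ 2) n‖ := by
  set x : ℝ := ‖u‖ ^ 2 with hxdef
  have hx0 : 0 ≤ x := by positivity
  have hx1 : x < 1 := pow_lt_one₀ (norm_nonneg u) hu1 two_ne_zero
  have hfac : ∀ i : ℕ, 0 < 1 - x ^ (i + 1) := by
    intro i
    have : x ^ (i + 1) < 1 := pow_lt_one₀ hx0 hx1 (by omega)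
    linarith
  set p : ℕ → ℝ := fun n => ∏ i ∈ Finset.range n, (1 - x ^ (i + 1)) with hp
  have hppos : ∀ n, 0 < p n := fun n => Finset.prod_pos fun i _ => hfac i
  have hplow : ∀ n, p n ≤ ‖qPoch (u ^ 2) (u ^ 2) n‖ := by
    intro n
    rw [qPoch, norm_prod]
    apply Finset.prod_le_prod
    · intro i _; exact (hfac i).le
    · intro i _
      have h1 : ‖u ^ 2 * (u ^ 2) ^ i‖ = x ^ (i + 1) := by
        simp only [norm_mul, norm_pow]; rw [hxdef]; ring
      calc 1 - x ^ (i + 1) = ‖(1 : ℂ)‖ - ‖u ^ 2 * (u ^ 2) ^ i‖ := by rw [norm_one, h1]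
        _ ≤ ‖1 - u ^ 2 * (u ^ 2) ^ i‖ := norm_sub_norm_le _ _
  obtain ⟨N, hN⟩ : ∃ N : ℕ, x ^ (N + 1) ≤ (1 - x) / 2 := by
    obtain ⟨N, hN⟩ := exists_pow_lt_of_lt_one (by linarith : (0:ℝ) < (1 - x) / 2) hx1
    refine ⟨N, ?_⟩
    calc x ^ (N + 1) = x ^ N * x := by ring
      _ ≤ x ^ N * 1 := by have := pow_nonneg hx0 N; nlinarith
      _ ≤ (1 - x) / 2 := by linarith
  refine ⟨p N / 2, by have := hppos N; linarith, ?_⟩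
  intro n
  have key : ∀ k, p N / 2 ≤ p (N + k) ∧ p N / 2 ≤ p N := by
    intro k
    constructor
    · have hsplit : p (N + k) = p N * ∏ i ∈ Finset.range k, (1 - x ^ (N + i + 1)) := by
        rw [hp]; exact Finset.prod_range_add _ N k
      have hg0 : ∀ i, 0 ≤ x ^ (N + i + 1) := fun i => pow_nonneg hx0 _
      have hg1 : ∀ i, x ^ (N + i + 1) ≤ 1 := fun i => pow_le_one₀ hx0 hx1.le
      have hw := weier (fun i => x ^ (N + i + 1)) hg0 hg1 k
      have hsum : ∑ i ∈ Finset.range k, x ^ (N + i + 1) ≤ 1 / 2 := by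
        have heq : ∑ i ∈ Finset.range k, x ^ (N + i + 1)
            = x ^ (N + 1) * ∑ i ∈ Finset.range k, x ^ i := by
          rw [Finset.mul_sum]
          refine Finset.sum_congr rfl fun i _ => ?_
          rw [← pow_add]
          congr 1
          omega
        rw [heq]
        have hgs := geom_sum_mul x k
        have h2 : (∑ i ∈ Finset.range k, x ^ i) * (1 - x) = 1 - x ^ k := by
          linear_combination -hgs
        have hgeo : ∑ i ∈ Finset.range k, x ^ i ≤ 1 / (1 - x) := by
          rw [le_div_iff₀ (by linarith : (0:ℝ) < 1 - x)]
          have := pow_nonneg hx0 k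
          linarith
        have hfin : ((1 - x) / 2) * (1 / (1 - x)) = 1 / 2 := by
          have h1x : (1:ℝ) - x ≠ 0 := by linarith
          field_simp
        calc x ^ (N + 1) * ∑ i ∈ Finset.range k, x ^ i
            ≤ ((1 - x) / 2) * (1 / (1 - x)) :=
              mul_le_mul hN hgeo (Finset.sum_nonneg fun i _ => pow_nonneg hx0 i) (by linarith)
          _ = 1 / 2 := hfin
      have : (1:ℝ) / 2 ≤ ∏ i ∈ Finset.range k, (1 - x ^ (N + i + 1)) := by linarith
      rw [hsplit]
      nlinarith [hppos N]
    · have := hppos N; linarith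
  rcases le_or_gt N n with h | h
  · obtain ⟨k, rfl⟩ : ∃ k, n = N + k := ⟨n - N, by omega⟩
    exact le_trans (key k).1 (hplow _)
  · -- n < N : p N ≤ p n
    obtain ⟨k, rfl⟩ : ∃ k, N = n + k := ⟨N - n, by omega⟩
    have hsplit : p (n + k) = p n * ∏ i ∈ Finset.range k, (1 - x ^ (n + i + 1)) := by
      rw [hp]; exact Finset.prod_range_add _ n k
    have hle1 : ∏ i ∈ Finset.range k, (1 - x ^ (n + i + 1)) ≤ 1 := by
      apply Finset.prod_le_one
      · intro i _; exact (hfac _).le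
      · intro i _; have := pow_nonneg hx0 (n + i + 1); linarith
    have : p (n + k) ≤ p n := by
      rw [hsplit]
      nlinarith [hppos n]
    have h2 := hppos (n + k)
    calc p (n + k) / 2 ≤ p n := by linarith
      _ ≤ ‖qPoch (u ^ 2) (u ^ 2) n‖ := hplow n

lemma summable_quad (r : ℝ) (hr0 : 0 < r) (hr1 : r < 1) (a b : ℤ) :
    Summable (fun n : ℕ => r ^ ((n : ℤ) * (n : ℤ) + a * (n : ℤ) + b)) := by
  apply Summable.of_norm_bounded_eventually_nat (g := fun n => r ^ n)
    (summable_geometric_of_lt_one hr0.le hr1)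
  filter_upwards [Filter.eventually_ge_atTop (a.natAbs + b.natAbs + 2)] with n hn
  rw [Real.norm_of_nonneg (zpow_nonneg hr0.le _)]
  have h1 : ((a.natAbs : ℤ)) + b.natAbs + 2 ≤ (n : ℤ) := by exact_mod_cast hn
  have ha1 : -(a.natAbs : ℤ) ≤ a := by omega
  have hb1 : -(b.natAbs : ℤ) ≤ b := by omega
  have hE : (n : ℤ) ≤ (n : ℤ) * (n : ℤ) + a * (n : ℤ) + b := by
    have h2 : ((b.natAbs : ℤ)) + 1 ≤ (n : ℤ) + a - 1 := by omega
    have h4 : (1 : ℤ) ≤ (n : ℤ) := by omega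
    have h5 : (1 : ℤ) * ((b.natAbs : ℤ) + 1) ≤ (n : ℤ) * ((n : ℤ) + a - 1) :=
      mul_le_mul h4 h2 (by omega) (by omega)
    nlinarith
  calc r ^ ((n : ℤ) * (n : ℤ) + a * (n : ℤ) + b) ≤ r ^ (n : ℤ) :=
        zpow_le_zpow_right_of_le_one₀ hr0 hr1.le hE
    _ = r ^ n := zpow_natCast r n

lemma summable_tetTerm (u : ℂ) (hu0 : 0 < ‖u‖) (hu1 : ‖u‖ < 1) (m e : ℤ) :
    Summable (tetTerm u m e) := by
  obtain ⟨C, hC, hCle⟩ := qPoch_lower u hu1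
  apply Summable.of_norm_bounded
    (g := fun n : ℕ => (C⁻¹ * C⁻¹) * ‖u‖ ^ ((n : ℤ) * (n : ℤ) + (1 - 2 * m) * (n : ℤ) + (-(e * m))))
    ((summable_quad ‖u‖ hu0 hu1 _ _).mul_left _)
  intro n
  rw [tetTerm]
  split
  · rename_i h
    simp only [norm_div, norm_mul, norm_pow, norm_neg, norm_one, one_pow, one_mul, norm_zpow]
    have hexp : (n : ℤ) * ((n : ℤ) + 1) - (2 * (n : ℤ) + e) * m
        = (n : ℤ) * (n : ℤ) + (1 - 2 * m) * (n : ℤ) + (-(e * m)) := by ring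
    rw [hexp]
    have hpos : (0:ℝ) < ‖u‖ ^ ((n : ℤ) * (n : ℤ) + (1 - 2 * m) * (n : ℤ) + (-(e * m))) :=
      zpow_pos hu0 _
    have hrw : (C⁻¹ * C⁻¹) * ‖u‖ ^ ((n : ℤ) * (n : ℤ) + (1 - 2 * m) * (n : ℤ) + (-(e * m)))
        = ‖u‖ ^ ((n : ℤ) * (n : ℤ) + (1 - 2 * m) * (n : ℤ) + (-(e * m))) / (C * C) := by
      field_simp
    rw [hrw]
    apply div_le_div_of_nonneg_left hpos.le (by positivity)
    exact mul_le_mul (hCle n) (hCle _) hC.le (norm_nonneg _)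
  · simp only [norm_zero]
    positivity

lemma summable_dTerm (u : ℂ) (hu0 : 0 < ‖u‖) (hu1 : ‖u‖ < 1) (m e : ℤ) :
    Summable (dTerm u m e) := by
  obtain ⟨C, hC, hCle⟩ := qPoch_lower u hu1
  apply Summable.of_norm_bounded
    (g := fun n : ℕ => ((2 * 2) * (C⁻¹ * C⁻¹)) *
      ‖u‖ ^ ((n : ℤ) * (n : ℤ) + (-1 - 2 * m) * (n : ℤ) + (-(e * m))))
    ((summable_quad ‖u‖ hu0 hu1 _ _).mul_left _)
  intro n
  rw [dTerm]
  simp only [norm_div, norm_mul, norm_pow, norm_neg, norm_one, one_pow, one_mul, norm_zpow]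
  have hexp : (n : ℤ) * ((n : ℤ) + 1) - (2 * (n : ℤ) + e) * m - 2 * (n : ℤ)
      = (n : ℤ) * (n : ℤ) + (-1 - 2 * m) * (n : ℤ) + (-(e * m)) := by ring
  rw [hexp]
  have hb : ∀ j : ℕ, ‖(1 : ℂ) - (u ^ 2) ^ j‖ ≤ 2 := by
    intro j
    calc ‖(1 : ℂ) - (u ^ 2) ^ j‖ ≤ ‖(1:ℂ)‖ + ‖(u ^ 2) ^ j‖ := norm_sub_le _ _
      _ ≤ 1 + 1 := by
          rw [norm_one, norm_pow, norm_pow]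
          have : (‖u‖ ^ 2) ^ j ≤ 1 :=
            pow_le_one₀ (by positivity) (pow_le_one₀ (norm_nonneg u) hu1.le)
          linarith
      _ = 2 := by norm_num
  have hpos : (0:ℝ) < ‖u‖ ^ ((n : ℤ) * (n : ℤ) + (-1 - 2 * m) * (n : ℤ) + (-(e * m))) :=
    zpow_pos hu0 _
  have hrw : ((2 * 2) * (C⁻¹ * C⁻¹)) *
      ‖u‖ ^ ((n : ℤ) * (n : ℤ) + (-1 - 2 * m) * (n : ℤ) + (-(e * m)))
      = ‖u‖ ^ ((n : ℤ) * (n : ℤ) + (-1 - 2 * m) * (n : ℤ) + (-(e * m))) * (2 * 2) / (C * C) := by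
    field_simp
  rw [hrw]
  apply div_le_div₀ (by positivity) ?_ (by positivity)
    (mul_le_mul (hCle n) (hCle _) hC.le (norm_nonneg _))
  apply mul_le_mul_of_nonneg_left _ hpos.le
  exact mul_le_mul (hb n) (hb _) (norm_nonneg _) (by norm_num)

lemma key_identity (u : ℂ) (hu : u ≠ 0) (hu1 : ‖u‖ < 1) (m e : ℤ) (n : ℕ) :
    u ^ e * tetTerm u (m + 1) e n + u ^ (-m) * tetTerm u m (e + 1) n - tetTerm u m e n
      = dTerm u m e n - dTerm u m e (n + 1) := by
  have hfac := qPoch_factor_ne u hu1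
  have hP := qPoch_ne u hu1
  have hq2n : ∀ j : ℕ, u ^ (2 * (j : ℤ)) = (u ^ 2) ^ j := by
    intro j
    rw [show (2 * (j : ℤ)) = ((2 * j : ℕ) : ℤ) by push_cast; ring, zpow_natCast, pow_mul]
  set a := u ^ ((n : ℤ) * ((n : ℤ) + 1) - (2 * (n : ℤ) + e) * m - 2 * (n : ℤ)) with ha
  set b := u ^ ((n : ℤ) * ((n : ℤ) + 1) - (2 * (n : ℤ) + e) * m - 2 * m) with hb
  have f5 : u ^ (((n + 1 : ℕ) : ℤ) * (((n + 1 : ℕ) : ℤ) + 1) - (2 * ((n + 1 : ℕ) : ℤ) + e) * m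
      - 2 * ((n + 1 : ℕ) : ℤ)) = b := by
    rw [hb]; congr 1; push_cast; ring
  rcases lt_trichotomy ((n : ℤ) + e + 1) 0 with hC | hB | hA
  · -- all terms vanish
    have c1 : ¬ ((-e).toNat ≤ n) := by omega
    have c2 : ¬ ((-(e + 1)).toNat ≤ n) := by omega
    have t1 : ((n : ℤ) + e + 1).toNat = 0 := by omega
    have t2 : (((n + 1 : ℕ) : ℤ) + e + 1).toNat = 0 := by push_cast; omega
    simp only [tetTerm, dTerm, if_neg c1, if_neg c2, t1, t2]
    simp
  · -- boundary case n + e + 1 = 0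
    have c1 : ¬ ((-e).toNat ≤ n) := by omega
    have c2 : (-(e + 1)).toNat ≤ n := by omega
    have t0 : ((n : ℤ) + (e + 1)).toNat = 0 := by omega
    have t1 : ((n : ℤ) + e + 1).toNat = 0 := by omega
    have t2 : (((n + 1 : ℕ) : ℤ) + e + 1).toNat = 1 := by push_cast; omega
    have hq0 : qPoch (u ^ 2) (u ^ 2) 0 = 1 := by simp [qPoch]
    have hq1 : qPoch (u ^ 2) (u ^ 2) 1 = 1 - u ^ 2 * (u ^ 2) ^ 0 := by
      rw [qPoch, Finset.prod_range_one]
    have f2 : u ^ (-m) * u ^ ((n : ℤ) * ((n : ℤ) + 1) - (2 * (n : ℤ) + (e + 1)) * m) = b := by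
      rw [hb, ← zpow_add₀ hu]; congr 1; ring
    simp only [tetTerm, dTerm, if_neg c1, if_pos c2, t0, t1, t2]
    rw [hq0, hq1, qPoch_succ (u ^ 2) (u ^ 2) n, mul_div_helper, f2, f5]
    simp only [mul_zero, zero_add, sub_zero]
    have hb1 : qPoch (u ^ 2) (u ^ 2) n * 1 ≠ 0 := mul_ne_zero (hP n) one_ne_zero
    have hb2 : qPoch (u ^ 2) (u ^ 2) n * (1 - u ^ 2 * (u ^ 2) ^ n) * (1 - u ^ 2 * (u ^ 2) ^ 0)
        ≠ 0 := mul_ne_zero (mul_ne_zero (hP n) (hfac n)) (hfac 0)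
    rw [div_sub_div _ _ hb1 hb2, div_eq_div_iff hb1 (mul_ne_zero hb1 hb2)]
    ring
  · -- main case n + e ≥ 0
    have c1 : (-e).toNat ≤ n := by omega
    have c2 : (-(e + 1)).toNat ≤ n := by omega
    set k := ((n : ℤ) + e).toNat with hk
    have t3 : ((n : ℤ) + (e + 1)).toNat = k + 1 := by omega
    have t4 : ((n : ℤ) + e + 1).toNat = k + 1 := by omega
    have t5 : (((n + 1 : ℕ) : ℤ) + e + 1).toNat = k + 2 := by push_cast; omega
    have f1 : u ^ e * u ^ ((n : ℤ) * ((n : ℤ) + 1) - (2 * (n : ℤ) + e) * (m + 1)) = a := by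
      rw [ha, ← zpow_add₀ hu]; congr 1; ring
    have f2 : u ^ (-m) * u ^ ((n : ℤ) * ((n : ℤ) + 1) - (2 * (n : ℤ) + (e + 1)) * m) = b := by
      rw [hb, ← zpow_add₀ hu]; congr 1; ring
    have f3 : u ^ ((n : ℤ) * ((n : ℤ) + 1) - (2 * (n : ℤ) + e) * m) = a * (u ^ 2) ^ n := by
      rw [ha, ← hq2n n, ← zpow_add₀ hu]; congr 1; ring
    have e2 : qPoch (u ^ 2) (u ^ 2) (k + 2)
        = qPoch (u ^ 2) (u ^ 2) k * (1 - u ^ 2 * (u ^ 2) ^ k) * (1 - u ^ 2 * (u ^ 2) ^ (k + 1)) := by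
      rw [show k + 2 = (k + 1) + 1 by omega, qPoch_succ, qPoch_succ]
    simp only [tetTerm, dTerm, if_pos c1, if_pos c2, t3, t4, t5, ← hk]
    rw [e2, qPoch_succ (u ^ 2) (u ^ 2) k, qPoch_succ (u ^ 2) (u ^ 2) n,
      mul_div_helper, mul_div_helper, f1, f2, f3, f5]
    have h1 : qPoch (u ^ 2) (u ^ 2) n * qPoch (u ^ 2) (u ^ 2) k ≠ 0 :=
      mul_ne_zero (hP n) (hP k)
    have h2 : qPoch (u ^ 2) (u ^ 2) n *
        (qPoch (u ^ 2) (u ^ 2) k * (1 - u ^ 2 * (u ^ 2) ^ k)) ≠ 0 :=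
      mul_ne_zero (hP n) (mul_ne_zero (hP k) (hfac k))
    have h3 : qPoch (u ^ 2) (u ^ 2) n * (1 - u ^ 2 * (u ^ 2) ^ n) *
        (qPoch (u ^ 2) (u ^ 2) k * (1 - u ^ 2 * (u ^ 2) ^ k) * (1 - u ^ 2 * (u ^ 2) ^ (k + 1)))
        ≠ 0 :=
      mul_ne_zero (mul_ne_zero (hP n) (hfac n))
        (mul_ne_zero (mul_ne_zero (hP k) (hfac k)) (hfac (k + 1)))
    rw [div_add_div _ _ h1 h2, div_sub_div _ _ (mul_ne_zero h1 h2) h1,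
      div_sub_div _ _ h2 h3,
      div_eq_div_iff (mul_ne_zero (mul_ne_zero h1 h2) h1) (mul_ne_zero h2 h3)]
    ring

/-- `q^{e/2} I_Δ(m+1,e) + q^{-m/2} I_Δ(m,e+1) - I_Δ(m,e) = 0`, `u = q^{1/2}`. -/
theorem stmt_7 (u : ℂ) (hu0 : 0 < ‖u‖) (hu1 : ‖u‖ < 1) (m e : ℤ) :
    u ^ e * tetIndex u (m + 1) e + u ^ (-m) * tetIndex u m (e + 1) - tetIndex u m e = 0 := by
  have hu : u ≠ 0 := by
    intro h; rw [h] at hu0; simp at hu0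
  have hS1 : Summable (fun n => u ^ e * tetTerm u (m + 1) e n) :=
    (summable_tetTerm u hu0 hu1 (m + 1) e).mul_left _
  have hS2 : Summable (fun n => u ^ (-m) * tetTerm u m (e + 1) n) :=
    (summable_tetTerm u hu0 hu1 m (e + 1)).mul_left _
  have hS3 : Summable (tetTerm u m e) := summable_tetTerm u hu0 hu1 m e
  have hd : Summable (dTerm u m e) := summable_dTerm u hu0 hu1 m e
  have hd' : Summable (fun n => dTerm u m e (n + 1)) := (summable_nat_add_iff 1).mpr hd
  have hd0 : dTerm u m e 0 = 0 := by simp [dTerm]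
  calc u ^ e * tetIndex u (m + 1) e + u ^ (-m) * tetIndex u m (e + 1) - tetIndex u m e
      = ∑' n : ℕ, (u ^ e * tetTerm u (m + 1) e n + u ^ (-m) * tetTerm u m (e + 1) n
           - tetTerm u m e n) := by
        rw [tetIndex, tetIndex, tetIndex, ← tsum_mul_left, ← tsum_mul_left,
          ← Summable.tsum_add hS1 hS2, ← Summable.tsum_sub (hS1.add hS2) hS3]
    _ = ∑' n : ℕ, (dTerm u m e n - dTerm u m e (n + 1)) :=
        tsum_congr (key_identity u hu hu1 m e)
    _ = (∑' n : ℕ, dTerm u m e n) - ∑' n : ℕ, dTerm u m e (n + 1) := Summable.tsum_sub hd hd'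
    _ = 0 := by rw [Summable.tsum_eq_zero_add hd, hd0]; ring
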